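/- Let U be a nonprincipal ultrafilter on ℕ which is not a Q-point. Then there exists an L-orthogonal sequence (e_n) in C({0,1}^ℕ) that converges along U, in the weak topology of C({0,1}^ℕ), to the constant function 1; that is, lim_U φ(e_n) = φ(1) for every continuous linear functional φ on C({0,1}^ℕ). -/

import Mathlib

open Set Filter Classical

namespace S14
variable {A : ℕ → Set ℕ}

noncomputable def blk (A : ℕ → Set ℕ) (n : ℕ) : ℕ := sInf {k | n ∈ A k}
noncomputable def r (A : ℕ → Set ℕ) (k : ℕ) : ℕ := (A k).ncard
noncomputable def idx (A : ℕ → Set ℕ) (n : ℕ) : ℕ := (A (blk A n) ∩ Set.Iio n).ncard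
noncomputable def pat (A : ℕ → Set ℕ) (n : ℕ) : Fin (r A (blk A n)) → Bool :=
  fun j => decide ((j : ℕ) = idx A n)

noncomputable def e (A : ℕ → Set ℕ) (n : ℕ) : C(ℕ → Bool, ℝ) :=
  ContinuousMap.comp
    (⟨fun v => if v = pat A n then (-1 : ℝ) else 1, continuous_of_discreteTopology⟩ :
      C((Fin (r A (blk A n)) → Bool), ℝ))
    ⟨fun x j => x (blk A n + (j : ℕ)), by exact continuous_pi fun j => continuous_apply _⟩

def P (A : ℕ → Set ℕ) (n : ℕ) (x : ℕ → Bool) : Prop :=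
  ∀ j < r A (blk A n), x (blk A n + j) = decide (j = idx A n)

open scoped Classical in
lemma e_apply (n : ℕ) (x : ℕ → Bool) :
    e A n x = if P A n x then -1 else 1 := by
  have : ((fun j : Fin (r A (blk A n)) => x (blk A n + (j : ℕ))) = pat A n) ↔ P A n x := by
    rw [funext_iff]
    constructor
    · intro h j hj; exact h ⟨j, hj⟩
    · intro h j; exact h j j.2
  simp only [e, ContinuousMap.comp_apply, ContinuousMap.coe_mk]
  by_cases h : P A n x
  · rw [if_pos (this.mpr h), if_pos h]
  · rw [if_neg (fun hh => h (this.mp hh)), if_neg h]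

lemma e_apply_of (n : ℕ) (x : ℕ → Bool) (h : P A n x) : e A n x = -1 := by
  classical rw [e_apply, if_pos h]

lemma e_apply_of_not (n : ℕ) (x : ℕ → Bool) (h : ¬ P A n x) : e A n x = 1 := by
  classical rw [e_apply, if_neg h]

lemma e_abs (n : ℕ) (x : ℕ → Bool) : |e A n x| = 1 := by
  classical rw [e_apply]; split <;> simp

lemma e_norm_le (n : ℕ) : ‖e A n‖ ≤ 1 := by
  refine (ContinuousMap.norm_le _ zero_le_one).mpr fun x => ?_
  rw [Real.norm_eq_abs, e_abs]

lemma mem_blk (hcover : (⋃ n, A n) = Set.univ) (n : ℕ) : n ∈ A (blk A n) := by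
  have : n ∈ ⋃ k, A k := hcover ▸ Set.mem_univ n
  obtain ⟨k, hk⟩ := Set.mem_iUnion.mp this
  exact Nat.sInf_mem (⟨k, hk⟩ : {k | n ∈ A k}.Nonempty)

lemma tendsto_blk (hfin : ∀ n, (A n).Finite) (hcover : (⋃ n, A n) = Set.univ) :
    Tendsto (blk A) atTop atTop := by
  rw [tendsto_atTop]
  intro K
  have hF : (⋃ k ∈ Set.Iio K, A k).Finite := (Set.finite_Iio K).biUnion fun k _ => hfin k
  obtain ⟨N, hN⟩ := hF.bddAbove
  rw [eventually_atTop]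
  refine ⟨N + 1, fun n hn => ?_⟩
  by_contra h
  push_neg at h
  have : n ∈ ⋃ k ∈ Set.Iio K, A k :=
    Set.mem_biUnion (show blk A n ∈ Set.Iio K from h) (mem_blk hcover n)
  have := hN this
  omega

lemma idx_lt (hfin : ∀ n, (A n).Finite) (hcover : (⋃ n, A n) = Set.univ) (n : ℕ) :
    idx A n < r A (blk A n) := by
  apply Set.ncard_lt_ncard _ (hfin _)
  constructor
  · exact Set.inter_subset_left
  · intro hsub
    exact absurd (hsub (mem_blk hcover n)).2 (lt_irrefl n)

lemma blk_eq (hdisj : Pairwise (Function.onFun Disjoint A)) (hcover : (⋃ n, A n) = Set.univ)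
    {n k : ℕ} (hk : n ∈ A k) : blk A n = k := by
  by_contra h
  exact (hdisj h).le_bot ⟨mem_blk hcover n, hk⟩

lemma ncard_Iio_lt {S : Set ℕ} (hS : S.Finite) {n m : ℕ} (hn : n ∈ S) (h : n < m) :
    (S ∩ Set.Iio n).ncard < (S ∩ Set.Iio m).ncard := by
  apply Set.ncard_lt_ncard
  · constructor
    · exact Set.inter_subset_inter_right _ (Set.Iio_subset_Iio h.le)
    · intro hsub
      have : n ∈ S ∩ Set.Iio n := hsub ⟨hn, h⟩
      exact absurd this.2 (lt_irrefl n)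
  · exact hS.inter_of_left _

lemma ncard_Iio_ne {S : Set ℕ} (hS : S.Finite) {n m : ℕ} (hn : n ∈ S) (hm : m ∈ S)
    (h : n ≠ m) : (S ∩ Set.Iio n).ncard ≠ (S ∩ Set.Iio m).ncard := by
  rcases h.lt_or_gt with h' | h'
  · exact (ncard_Iio_lt hS hn h').ne
  · exact (ncard_Iio_lt hS hm h').ne'

lemma no_selector (U : Ultrafilter ℕ) (hfin : ∀ n, (A n).Finite)
    (hne : ∀ n, (A n).Nonempty) (hdisj : Pairwise (Function.onFun Disjoint A))
    (hbad : ∀ B ∈ U, ∃ n, (B ∩ A n).ncard ≠ 1) {B : Set ℕ} (hB : B ∈ U)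
    (h1 : ∀ k, (B ∩ A k).ncard ≤ 1) : False := by
  set d : ℕ → ℕ := fun k => if h : (B ∩ A k).Nonempty then h.choose else (hne k).choose with hd
  have hdA : ∀ k, d k ∈ A k := by
    intro k
    by_cases h : (B ∩ A k).Nonempty
    · simpa [hd, dif_pos h] using h.choose_spec.2
    · simpa [hd, dif_neg h] using (hne k).choose_spec
  have hB' : B ∪ Set.range d ∈ U := Filter.mem_of_superset hB Set.subset_union_left
  obtain ⟨n, hn⟩ := hbad _ hB'
  apply hn
  have : (B ∪ Set.range d) ∩ A n = {d n} := by
    apply Set.eq_singleton_iff_unique_mem.mpr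
    constructor
    · exact ⟨Set.mem_union_right _ ⟨n, rfl⟩, hdA n⟩
    · rintro m ⟨hm1 | ⟨k, rfl⟩, hm2⟩
      · have hne' : (B ∩ A n).Nonempty := ⟨m, hm1, hm2⟩
        have hdm : d n ∈ B ∩ A n := by simpa [hd, dif_pos hne'] using hne'.choose_spec
        exact (Set.ncard_le_one ((hfin n).subset Set.inter_subset_right)).mp
          (h1 n) m ⟨hm1, hm2⟩ (d n) hdm
      · have : k = n := by
          by_contra h
          exact (hdisj h).le_bot ⟨hdA k, hm2⟩
        rw [this]
  rw [this, Set.ncard_singleton]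

lemma no_bounded (U : Ultrafilter ℕ) (hfin : ∀ n, (A n).Finite)
    (hne : ∀ n, (A n).Nonempty) (hdisj : Pairwise (Function.onFun Disjoint A))
    (hcover : (⋃ n, A n) = Set.univ)
    (hbad : ∀ B ∈ U, ∃ n, (B ∩ A n).ncard ≠ 1) {B : Set ℕ} (hB : B ∈ U)
    {M : ℕ} (hM : ∀ k, (B ∩ A k).ncard ≤ M) : False := by
  set rank : ℕ → ℕ := fun n => ((B ∩ A (blk A n)) ∩ Set.Iio n).ncard with hrank
  have hBfin : ∀ k, (B ∩ A k).Finite := fun k => (hfin k).subset Set.inter_subset_right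
  have hranklt : ∀ n ∈ B, rank n < M := by
    intro n hn
    have hnmem : n ∈ B ∩ A (blk A n) := ⟨hn, mem_blk hcover n⟩
    calc rank n < (B ∩ A (blk A n)).ncard := by
          apply Set.ncard_lt_ncard _ (hBfin _)
          constructor
          · exact Set.inter_subset_left
          · intro hsub
            exact absurd (hsub hnmem).2 (lt_irrefl n)
      _ ≤ M := hM _
  have hsub : B ⊆ ⋃ j ∈ Set.Iio M, {n ∈ B | rank n = j} := by
    intro n hn
    exact Set.mem_biUnion (hranklt n hn) ⟨hn, rfl⟩
  have hmem : (⋃ j ∈ Set.Iio M, {n ∈ B | rank n = j}) ∈ U :=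
    Filter.mem_of_superset hB hsub
  obtain ⟨j, -, hj⟩ := (Ultrafilter.finite_biUnion_mem_iff (Set.finite_Iio M)).mp hmem
  refine no_selector U hfin hne hdisj hbad hj fun k => ?_
  apply (Set.ncard_le_one (((hfin k).subset Set.inter_subset_right))).mpr
  rintro a ⟨⟨haB, har⟩, haA⟩ b ⟨⟨hbB, hbr⟩, hbA⟩
  by_contra hab
  have hka : blk A a = k := blk_eq hdisj hcover haA
  have hkb : blk A b = k := blk_eq hdisj hcover hbA
  have : rank a ≠ rank b := by
    simp only [hrank, hka, hkb]
    exact ncard_Iio_ne (hBfin k) ⟨haB, haA⟩ ⟨hbB, hbA⟩ hab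
  rw [har, hbr] at this
  exact this rfl


lemma lorth (hfin : ∀ n, (A n).Finite) (hcover : (⋃ n, A n) = Set.univ)
    (g : C(ℕ → Bool, ℝ)) :
    Tendsto (fun n => ‖g + e A n‖) atTop (nhds (1 + ‖g‖)) := by
  obtain ⟨x0, -, hx0⟩ := isCompact_univ.exists_isMaxOn ⟨fun _ => false, trivial⟩
    (Continuous.continuousOn (by continuity : Continuous fun x => |g x|))
  have hgn : ‖g‖ = |g x0| := by
    refine le_antisymm ?_ ?_
    · exact (ContinuousMap.norm_le _ (abs_nonneg _)).mpr fun x => by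
        simpa [Real.norm_eq_abs] using hx0 (Set.mem_univ x)
    · simpa [Real.norm_eq_abs] using g.norm_coe_le_norm x0
  set c : ℝ := if g x0 ≤ 0 then -1 else 1 with hc
  set y : ℕ → (ℕ → Bool) := fun n m =>
    if blk A n ≤ m ∧ m < blk A n + r A (blk A n) then
      (if g x0 ≤ 0 then decide (m - blk A n = idx A n) else false)
    else x0 m with hy
  have hey : ∀ n, e A n (y n) = c := by
    intro n
    by_cases hs : g x0 ≤ 0
    · rw [hc, if_pos hs]
      apply e_apply_of
      intro j hj
      have hcond : blk A n ≤ blk A n + j ∧ blk A n + j < blk A n + r A (blk A n) :=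
        ⟨Nat.le_add_right _ _, by omega⟩
      rw [hy]
      simp only [if_pos hcond, if_pos hs, Nat.add_sub_cancel_left]
    · rw [hc, if_neg hs]
      apply e_apply_of_not
      intro hP
      have hj := hP (idx A n) (idx_lt hfin hcover n)
      have hcond : blk A n ≤ blk A n + idx A n ∧
          blk A n + idx A n < blk A n + r A (blk A n) :=
        ⟨Nat.le_add_right _ _, by have := idx_lt hfin hcover n; omega⟩
      rw [hy] at hj
      simp only [if_pos hcond, if_neg hs] at hj
      simp at hj
  have hyx : Tendsto y atTop (nhds x0) := by
    rw [tendsto_pi_nhds]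
    intro m
    have hev : ∀ᶠ n in atTop, y n m = x0 m := by
      filter_upwards [(tendsto_blk hfin hcover).eventually_ge_atTop (m + 1)] with n hn
      rw [hy]
      simp only [if_neg (by omega : ¬(blk A n ≤ m ∧ m < blk A n + r A (blk A n)))]
    exact tendsto_const_nhds.congr' (by filter_upwards [hev] with n hn using hn.symm)
  have hgy : Tendsto (fun n => |g (y n) + c|) atTop (nhds (|g x0 + c|)) := by
    have := ((map_continuous g).tendsto x0).comp hyx
    exact ((continuous_abs.comp (continuous_add_right c)).tendsto _).comp this
  have hval : |g x0 + c| = 1 + ‖g‖ := by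
    rw [hgn, hc]
    by_cases hs : g x0 ≤ 0
    · rw [if_pos hs, abs_of_nonpos (by linarith), abs_of_nonpos hs]; ring
    · push_neg at hs
      rw [if_neg (not_le.mpr hs), abs_of_nonneg (by linarith), abs_of_pos hs]; ring
  rw [← hval]
  refine tendsto_of_tendsto_of_tendsto_of_le_of_le hgy tendsto_const_nhds ?_ ?_
  · intro n
    calc |g (y n) + c| = ‖(g + e A n) (y n)‖ := by
          rw [ContinuousMap.add_apply, hey n, Real.norm_eq_abs]
    _ ≤ ‖g + e A n‖ := (g + e A n).norm_coe_le_norm (y n)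
  · intro n
    calc ‖g + e A n‖ ≤ ‖g‖ + ‖e A n‖ := norm_add_le _ _
    _ ≤ |g x0 + c| := by rw [hval]; have := e_norm_le (A := A) n; linarith



lemma P_disj (hfin : ∀ n, (A n).Finite) (hdisj : Pairwise (Function.onFun Disjoint A))
    (hcover : (⋃ n, A n) = Set.univ) {k n m : ℕ} {x : ℕ → Bool}
    (hn : n ∈ A k) (hm : m ∈ A k) (hnm : n ≠ m) (h1 : P A n x) (h2 : P A m x) : False := by
  have bn : blk A n = k := blk_eq hdisj hcover hn
  have bm : blk A m = k := blk_eq hdisj hcover hm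
  have hidx : idx A n ≠ idx A m := by
    simp only [idx, bn, bm]
    exact ncard_Iio_ne (hfin k) hn hm hnm
  have hlt : idx A n < r A (blk A n) := idx_lt hfin hcover n
  have e1 := h1 (idx A n) hlt
  have e2 := h2 (idx A n) (by rw [bm, ← bn]; exact hlt)
  rw [bn] at e1
  rw [bm] at e2
  rw [e1] at e2
  simp [hidx] at e2

lemma weak_limit (U : Ultrafilter ℕ) (hfin : ∀ n, (A n).Finite)
    (hne : ∀ n, (A n).Nonempty) (hdisj : Pairwise (Function.onFun Disjoint A))
    (hcover : (⋃ n, A n) = Set.univ)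
    (hbad : ∀ B ∈ U, ∃ n, (B ∩ A n).ncard ≠ 1)
    (φ : StrongDual ℝ C(ℕ → Bool, ℝ)) :
    Tendsto (fun n => φ (e A n)) (U : Filter ℕ) (nhds (φ 1)) := by
  rw [Metric.tendsto_nhds]
  intro ε hε
  by_contra hcon
  have hC : {n | ε ≤ dist (φ (e A n)) (φ 1)} ∈ U := by
    have := (Ultrafilter.eventually_not (f := U)).mpr hcon
    filter_upwards [this] with n hn
    exact not_lt.mp hn
  set u : ℕ → C(ℕ → Bool, ℝ) := fun n => e A n - 1 with hu
  have hphiu : ∀ n, dist (φ (e A n)) (φ 1) = |φ (u n)| := by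
    intro n
    rw [Real.dist_eq, hu]
    simp [map_sub]
  have hux : ∀ n x, u n x = if P A n x then -2 else 0 := by
    intro n x
    rw [hu]
    simp only [ContinuousMap.sub_apply, ContinuousMap.one_apply, e_apply]
    split <;> norm_num
  set C := {n | ε ≤ dist (φ (e A n)) (φ 1)} with hCdef
  set M : ℕ := ⌊2 * ‖φ‖ / ε⌋₊ with hM
  refine no_bounded U hfin hne hdisj hcover hbad hC (M := M) fun k => ?_
  have hTfin : (C ∩ A k).Finite := (hfin k).subset Set.inter_subset_right
  set T := hTfin.toFinset with hT
  have hmemT : ∀ n, n ∈ T ↔ n ∈ C ∩ A k := fun n => hTfin.mem_toFinset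
  set σ : ℕ → ℝ := fun n => if 0 ≤ φ (u n) then 1 else -1 with hσ
  have hσabs : ∀ n, σ n * φ (u n) = |φ (u n)| := by
    intro n
    simp only [hσ]
    by_cases h : 0 ≤ φ (u n)
    · rw [if_pos h, one_mul, abs_of_nonneg h]
    · rw [if_neg h, abs_of_neg (not_le.mp h)]; ring
  have hsum_le : ∑ n ∈ T, |φ (u n)| ≤ 2 * ‖φ‖ := by
    have h1 : ∑ n ∈ T, |φ (u n)| = φ (∑ n ∈ T, σ n • u n) := by
      rw [map_sum]
      refine Finset.sum_congr rfl fun n _ => ?_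
      rw [map_smul, smul_eq_mul, hσabs]
    have h2 : ‖∑ n ∈ T, σ n • u n‖ ≤ 2 := by
      refine (ContinuousMap.norm_le _ (by norm_num)).mpr fun x => ?_
      have hx : (∑ n ∈ T, σ n • u n) x = ∑ n ∈ T, σ n * u n x := by simp
      rw [hx, Real.norm_eq_abs]
      by_cases hex : ∃ n₀ ∈ T, P A n₀ x
      · obtain ⟨n₀, hn₀T, hn₀P⟩ := hex
        rw [Finset.sum_eq_single_of_mem n₀ hn₀T ?_]
        · have : |σ n₀| = 1 := by simp only [hσ]; split <;> norm_num
          rw [abs_mul, this, one_mul, hux]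
          split <;> norm_num
        · intro b hbT hbn
          have hbP : ¬ P A b x := fun hPb =>
            P_disj hfin hdisj hcover ((hmemT b).mp hbT).2 ((hmemT n₀).mp hn₀T).2 hbn hPb hn₀P
          rw [hux, if_neg hbP, mul_zero]
      · push_neg at hex
        rw [Finset.sum_eq_zero fun n hn => by rw [hux, if_neg (hex n hn), mul_zero]]
        norm_num
    calc ∑ n ∈ T, |φ (u n)| = φ (∑ n ∈ T, σ n • u n) := h1
      _ ≤ |φ (∑ n ∈ T, σ n • u n)| := le_abs_self _
      _ ≤ ‖φ‖ * ‖∑ n ∈ T, σ n • u n‖ := by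
          rw [← Real.norm_eq_abs]; exact φ.le_opNorm _
      _ ≤ ‖φ‖ * 2 := by nlinarith [norm_nonneg φ]
      _ = 2 * ‖φ‖ := by ring
  have hcard : (T.card : ℝ) * ε ≤ 2 * ‖φ‖ := by
    calc (T.card : ℝ) * ε = ∑ _n ∈ T, ε := by rw [Finset.sum_const, nsmul_eq_mul]
      _ ≤ ∑ n ∈ T, |φ (u n)| := by
          refine Finset.sum_le_sum fun n hn => ?_
          have hnC : n ∈ C := ((hmemT n).mp hn).1
          rw [← hphiu]
          exact hnC
      _ ≤ 2 * ‖φ‖ := hsum_le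
  have : (T.card : ℝ) ≤ 2 * ‖φ‖ / ε := by
    rw [le_div_iff₀ hε]
    exact hcard
  have hcard' : T.card ≤ M := Nat.le_floor this
  rw [Set.ncard_eq_toFinset_card _ hTfin]
  exact hcard'
end S14

/-- Let `U` be a nonprincipal ultrafilter on `ℕ` which is not a `Q`-point
(a `Q`-point is an ultrafilter such that for every partition of `ℕ` into nonempty finite
sets there is a set in the ultrafilter meeting each piece in exactly one point). Then there
is an `L`-orthogonal sequence `(e n)` in `C({0,1}^ℕ)` converging along `U`, in the weak
topology of `C({0,1}^ℕ)`, to the constant function `1`. -/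
theorem stmt14 (U : Ultrafilter ℕ)
    (hnp : ∀ n : ℕ, (U : Filter ℕ) ≠ pure n)
    (hnQ : ¬ ∀ A : ℕ → Set ℕ, (∀ n, (A n).Finite) → (∀ n, (A n).Nonempty) →
      Pairwise (Function.onFun Disjoint A) → (⋃ n, A n) = Set.univ →
      ∃ B ∈ U, ∀ n, (B ∩ A n).ncard = 1) :
    ∃ e : ℕ → C(ℕ → Bool, ℝ),
      (∀ n, ‖e n‖ ≤ 1) ∧
      (∀ g : C(ℕ → Bool, ℝ),
        Filter.Tendsto (fun n => ‖g + e n‖) Filter.atTop (nhds (1 + ‖g‖))) ∧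
      ∀ φ : StrongDual ℝ C(ℕ → Bool, ℝ),
        Filter.Tendsto (fun n => φ (e n)) (U : Filter ℕ) (nhds (φ 1)) := by
  push_neg at hnQ
  obtain ⟨A, hfin, hne, hdisj, hcover, hbad⟩ := hnQ
  exact ⟨S14.e A, fun n => S14.e_norm_le n,
    fun g => S14.lorth hfin hcover g,
    fun φ => S14.weak_limit U hfin hne hdisj hcover hbad φ⟩
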